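/- Let X₀, X₁ be rearrangement invariant spaces on [0,1] with X₀ ⊂ X₁, ‖x‖_{X₁} ≤ ‖x‖_{X₀} for all x ∈ X₀. For α, β > 0 and a measurable set A ⊂ [0,1] with m(A) = t, the K-functional satisfies k(α, β, χ_A; X₀, X₁) = min{α·φ_{X₀}(t), β·φ_{X₁}(t)}, where φ_{X_i} are the fundamental functions. -/

import Mathlib

open MeasureTheory Set Filter Topology
open scoped ENNReal NNReal

noncomputable section

/-- A Banach function lattice on a subset `I ⊆ ℝ` (with Lebesgue measure), encoded by
a membership predicate `Mem` and a (total) norm function `N` satisfying the lattice/ideal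
axioms on members. -/
structure BFL (I : Set ℝ) where
  Mem : (ℝ → ℝ) → Prop
  N : (ℝ → ℝ) → ℝ
  mem_meas : ∀ f, Mem f → AEMeasurable f (volume.restrict I)
  nonneg : ∀ f, 0 ≤ N f
  zero_mem : Mem 0
  zero_norm : N 0 = 0
  ideal : ∀ f g, AEMeasurable f (volume.restrict I) →
    (∀ᵐ t ∂volume.restrict I, |f t| ≤ |g t|) → Mem g → Mem f ∧ N f ≤ N g
  add_mem : ∀ f g, Mem f → Mem g → Mem (f + g)
  add_le : ∀ f g, Mem f → Mem g → N (f + g) ≤ N f + N g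
  smul_mem : ∀ (c : ℝ) f, Mem f → Mem (c • f)
  smul_norm : ∀ (c : ℝ) f, Mem f → N (c • f) = |c| * N f

/-- A rearrangement invariant (symmetric) space on `I`: a Banach function lattice whose
norm depends only on the distribution function, having the Fatou property (the paper's
standing assumption that r.i. spaces are separable or maximal). -/
structure RIS (I : Set ℝ) extends BFL I where
  symm : ∀ f g, AEMeasurable f (volume.restrict I) → Mem g →
    (∀ τ : ℝ, 0 < τ →
      (volume.restrict I) {t | τ < |f t|} = (volume.restrict I) {t | τ < |g t|}) →
    Mem f ∧ N f = N g
  fatou : ∀ (f : ℕ → ℝ → ℝ) (g : ℝ → ℝ) (C : ℝ), (∀ n, Mem (f n)) →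
    (∀ n, ∀ᵐ t ∂volume.restrict I, 0 ≤ f n t ∧ f n t ≤ f (n + 1) t) →
    (∀ᵐ t ∂volume.restrict I, Tendsto (fun n => f n t) atTop (𝓝 (g t))) →
    AEMeasurable g (volume.restrict I) → (∀ n, N (f n) ≤ C) →
    Mem g ∧ N g ≤ C

/-- The fundamental function `φ_X(t) = ‖χ_{[0,t]}‖_X` of an r.i. space on `[0,1]`. -/
def fund (X : RIS (Set.Icc (0:ℝ) 1)) (t : ℝ) : ℝ :=
  X.N ((Set.Icc (0:ℝ) t).indicator fun _ => (1:ℝ))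

/-- The Peetre K-functional `k(α, β, a; X₀, X₁)`. -/
def Kfun {I : Set ℝ} (X0 X1 : BFL I) (α β : ℝ) (a : ℝ → ℝ) : ℝ :=
  sInf {v | ∃ a0 a1, X0.Mem a0 ∧ X1.Mem a1 ∧ a = a0 + a1 ∧
    v = α * X0.N a0 + β * X1.N a1}


namespace Stmt1Aux

lemma sumval {ι : Type*} [Fintype ι] (P : ι → Set ℝ) (v : ι → ℝ)
    (hdis : Pairwise (Function.onFun Disjoint P)) {x : ℝ} {j : ι} (hj : x ∈ P j) :
    ∑ i, (P i).indicator (fun _ => v i) x = v j := by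
  rw [Finset.sum_eq_single j]
  · simp [Set.indicator_of_mem hj]
  · intro i _ hij
    have hx : x ∉ P i := fun hx => Set.disjoint_left.mp (hdis hij) hx hj
    simp [Set.indicator_of_notMem hx]
  · simp

lemma sumval_zero {ι : Type*} [Fintype ι] (P : ι → Set ℝ) (v : ι → ℝ)
    {x : ℝ} (hx : ∀ i, x ∉ P i) :
    ∑ i, (P i).indicator (fun _ => v i) x = 0 := by
  apply Finset.sum_eq_zero
  intro i _
  simp [Set.indicator_of_notMem (hx i)]

/-- Sierpiński-type intermediate value: a measurable subset of `[0,1]` contains a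
measurable subset of any smaller measure. -/
lemma sierp {S : Set ℝ} (hS : MeasurableSet S) (hSI : S ⊆ Set.Icc (0:ℝ) 1)
    {r : ℝ≥0∞} (hr : r ≤ volume S) :
    ∃ B : Set ℝ, B ⊆ S ∧ MeasurableSet B ∧ volume B = r := by
  have hfin : volume S ≠ ∞ := by
    refine ne_of_lt (lt_of_le_of_lt (measure_mono hSI) ?_)
    simp [Real.volume_Icc]
  have hrfin : r ≠ ∞ := by
    intro h; rw [h] at hr; exact hfin (top_le_iff.mp hr)
  set g : ℝ → ℝ := fun x => (volume (S ∩ Set.Iic x)).toReal with hg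
  have hfinx : ∀ x, volume (S ∩ Set.Iic x) ≠ ∞ := fun x =>
    ne_of_lt (lt_of_le_of_lt (measure_mono Set.inter_subset_left) hfin.lt_top)
  have hlip : LipschitzWith 1 g := by
    rw [lipschitzWith_iff_dist_le_mul]
    intro x y
    wlog hxy : y ≤ x generalizing x y
    · rw [dist_comm, dist_comm x y]; exact this y x (le_of_not_ge hxy)
    have h1 : volume (S ∩ Set.Iic x) ≤ volume (S ∩ Set.Iic y) + ENNReal.ofReal (x - y) := by
      have : S ∩ Set.Iic x ⊆ (S ∩ Set.Iic y) ∪ Set.Ioc y x := by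
        intro z hz
        rcases le_or_gt z y with h | h
        · exact Or.inl ⟨hz.1, h⟩
        · exact Or.inr ⟨h, hz.2⟩
      calc volume (S ∩ Set.Iic x) ≤ volume ((S ∩ Set.Iic y) ∪ Set.Ioc y x) := measure_mono this
        _ ≤ volume (S ∩ Set.Iic y) + volume (Set.Ioc y x) := measure_union_le _ _
        _ = volume (S ∩ Set.Iic y) + ENNReal.ofReal (x - y) := by rw [Real.volume_Ioc]
    have h2 : g y ≤ g x := by
      apply ENNReal.toReal_mono (hfinx x)
      exact measure_mono (Set.inter_subset_inter_right _ (Set.Iic_subset_Iic.mpr hxy))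
    have h3 : g x ≤ g y + (x - y) := by
      have := ENNReal.toReal_mono (by
        refine ENNReal.add_ne_top.mpr ⟨hfinx y, ENNReal.ofReal_ne_top⟩) h1
      rwa [ENNReal.toReal_add (hfinx y) ENNReal.ofReal_ne_top,
        ENNReal.toReal_ofReal (by linarith)] at this
    rw [Real.dist_eq, Real.dist_eq, abs_of_nonneg (by linarith : (0:ℝ) ≤ g x - g y),
      abs_of_nonneg (by linarith : (0:ℝ) ≤ x - y)]
    push_cast
    linarith
  have hg0 : g 0 = 0 := by
    have : S ∩ Set.Iic 0 ⊆ {0} := by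
      intro z hz; exact Set.mem_singleton_iff.mpr (le_antisymm hz.2 (hSI hz.1).1)
    have h0 : volume (S ∩ Set.Iic 0) = 0 :=
      le_antisymm (le_trans (measure_mono this) (by simp)) zero_le
    simp [hg, h0]
  have hg1 : g 1 = (volume S).toReal := by
    have : S ∩ Set.Iic 1 = S := by
      apply Set.inter_eq_self_of_subset_left
      intro z hz; exact (hSI hz).2
    simp [hg, this]
  have hIVT : r.toReal ∈ Set.Icc (g 0) (g 1) := by
    constructor
    · rw [hg0]; exact ENNReal.toReal_nonneg
    · rw [hg1]; exact ENNReal.toReal_mono hfin hr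
  obtain ⟨x, -, hx⟩ := intermediate_value_Icc (by norm_num : (0:ℝ) ≤ 1)
    (hlip.continuous.continuousOn) hIVT
  refine ⟨S ∩ Set.Iic x, Set.inter_subset_left, hS.inter measurableSet_Iic, ?_⟩
  have := congrArg ENNReal.ofReal hx
  rwa [hg, ENNReal.ofReal_toReal (hfinx x), ENNReal.ofReal_toReal hrfin] at this

/-- Partition a measurable subset of `[0,1]` into `k` pieces of prescribed equal measure. -/
lemma partn {S : Set ℝ} (hS : MeasurableSet S) (hSI : S ⊆ Set.Icc (0:ℝ) 1)
    (a : ℝ≥0∞) : ∀ k : ℕ, (k : ℝ≥0∞) * a ≤ volume S →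
    ∃ C : Fin k → Set ℝ, (∀ j, MeasurableSet (C j)) ∧ (∀ j, C j ⊆ S) ∧
      Pairwise (Function.onFun Disjoint C) ∧ ∀ j, volume (C j) = a := by
  intro k
  induction k generalizing S with
  | zero =>
    intro _
    exact ⟨fun j => j.elim0, fun j => j.elim0, fun j => j.elim0,
      fun i => i.elim0, fun j => j.elim0⟩
  | succ k ih =>
    intro hk
    have hk' : ((k:ℝ≥0∞) + 1) * a ≤ volume S := by push_cast at hk; exact hk
    have ha : a ≤ volume S := by
      refine le_trans ?_ hk'
      nth_rewrite 1 [← one_mul a]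
      exact mul_le_mul_left (by simp) a
    have hafin : a ≠ ∞ := by
      refine ne_of_lt (lt_of_le_of_lt ha (lt_of_le_of_lt (measure_mono hSI) ?_))
      simp [Real.volume_Icc]
    obtain ⟨B, hBS, hBm, hBvol⟩ := sierp hS hSI ha
    have hadd : volume (S \ B) + a = volume S := by
      rw [← hBvol, ← measure_union Set.disjoint_sdiff_left hBm,
        Set.diff_union_of_subset hBS]
    have hSBvol : (k : ℝ≥0∞) * a ≤ volume (S \ B) := by
      rw [← ENNReal.add_le_add_iff_right hafin, hadd]
      calc (k : ℝ≥0∞) * a + a = ((k:ℝ≥0∞) + 1) * a := by ring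
        _ ≤ volume S := hk'
    obtain ⟨C', hC'm, hC'S, hC'dis, hC'vol⟩ := ih (hS.diff hBm) (fun x hx => hSI hx.1) hSBvol
    refine ⟨Fin.cons B C', ?_, ?_, ?_, ?_⟩
    · intro j
      induction j using Fin.cases with
      | zero => simpa using hBm
      | succ i => simpa using hC'm i
    · intro j
      induction j using Fin.cases with
      | zero => simpa using hBS
      | succ i => simp only [Fin.cons_succ]; exact fun x hx => (hC'S i hx).1
    · intro i j hij
      induction i using Fin.cases with
      | zero =>
        induction j using Fin.cases with
        | zero => exact absurd rfl hij
        | succ j' =>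
          simp only [Function.onFun, Fin.cons_zero, Fin.cons_succ]
          exact Set.disjoint_left.mpr fun x hx hx' => ((hC'S j' hx').2 hx)
      | succ i' =>
        induction j using Fin.cases with
        | zero =>
          simp only [Function.onFun, Fin.cons_zero, Fin.cons_succ]
          exact Set.disjoint_left.mpr fun x hx hx' => ((hC'S i' hx).2 hx')
        | succ j' =>
          simp only [Function.onFun, Fin.cons_succ]
          exact hC'dis (fun h => hij (by rw [h]))
    · intro j
      induction j using Fin.cases with
      | zero => simpa using hBvol
      | succ i => simpa using hC'vol i


abbrev II : Set ℝ := Set.Icc (0:ℝ) 1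

lemma restrict_apply_of_subset {S : Set ℝ} (hS : S ⊆ II) :
    (volume.restrict II) S = volume S := by
  rw [Measure.restrict_apply' measurableSet_Icc, Set.inter_eq_self_of_subset_left hS]

lemma dist_indicator_set (S : Set ℝ) (τ : ℝ) (hτ : 0 < τ) :
    {x | τ < |S.indicator (fun _ => (1:ℝ)) x|} = if τ < 1 then S else ∅ := by
  ext x
  simp only [Set.mem_setOf_eq, Set.indicator_apply]
  by_cases hx : x ∈ S <;> by_cases h1 : τ < 1 <;>
    simp [hx, h1, abs_of_nonneg, hτ.le, not_lt.mpr hτ.le]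

lemma mem_norm_ind (X : RIS II) {S : Set ℝ} (hmem : X.Mem (S.indicator fun _ => (1:ℝ)))
    {t : ℝ} (ht1 : t ≤ 1)
    (hvol : (volume.restrict II) S = ENNReal.ofReal t) :
    X.Mem ((Set.Icc (0:ℝ) t).indicator fun _ => (1:ℝ)) ∧
      fund X t = X.N (S.indicator fun _ => (1:ℝ)) := by
  have h := X.symm ((Set.Icc (0:ℝ) t).indicator fun _ => (1:ℝ)) (S.indicator fun _ => (1:ℝ))
    (measurable_const.indicator measurableSet_Icc).aemeasurable hmem ?_
  · exact ⟨h.1, h.2⟩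
  · intro τ hτ
    rw [dist_indicator_set _ τ hτ, dist_indicator_set _ τ hτ]
    by_cases h1 : τ < 1
    · rw [if_pos h1, if_pos h1, hvol,
        restrict_apply_of_subset (Set.Icc_subset_Icc le_rfl ht1)]
      simp [Real.volume_Icc]
    · rw [if_neg h1, if_neg h1]

lemma mem_ind (X0 : RIS II) (hconst : X0.Mem (II.indicator fun _ => (1:ℝ)))
    {S : Set ℝ} (hSm : MeasurableSet S) :
    X0.Mem (S.indicator fun _ => (1:ℝ)) := by
  refine (X0.ideal _ _ ((measurable_const.indicator hSm).aemeasurable) ?_ hconst).1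
  filter_upwards [ae_restrict_mem measurableSet_Icc] with x hx
  by_cases hxS : x ∈ S <;>
    simp [Set.indicator_of_mem, Set.indicator_of_notMem, hxS, hx]


lemma sum_ind_measurable {ι : Type*} [Fintype ι] (P : ι → Set ℝ)
    (hPm : ∀ i, MeasurableSet (P i)) (w : ι → ℝ) :
    Measurable (fun x => ∑ i, (P i).indicator (fun _ => w i) x) :=
  Finset.measurable_sum _ fun i _ => measurable_const.indicator (hPm i)

lemma dist_sum_ind {ι : Type*} [Fintype ι] [DecidableEq ι] {P : ι → Set ℝ}
    (hdis : Pairwise (Function.onFun Disjoint P))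
    (w : ι → ℝ) (hw : ∀ i, 0 ≤ w i) {τ : ℝ} (hτ : 0 < τ) :
    {x | τ < |∑ i, (P i).indicator (fun _ => w i) x|}
      = ⋃ i ∈ Finset.univ.filter (fun i => τ < w i), P i := by
  ext x
  simp only [Set.mem_setOf_eq, Set.mem_iUnion, Finset.mem_filter, Finset.mem_univ, true_and,
    exists_prop]
  by_cases hx : ∃ j, x ∈ P j
  · obtain ⟨j, hj⟩ := hx
    rw [sumval P w hdis hj, abs_of_nonneg (hw j)]
    constructor
    · intro h; exact ⟨j, h, hj⟩
    · rintro ⟨i, hi, hxi⟩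
      rcases eq_or_ne i j with rfl | hij
      · exact hi
      · exact absurd hj (Set.disjoint_left.mp (hdis hij) hxi)
  · push_neg at hx
    rw [sumval_zero P w hx]
    simp only [abs_zero]
    constructor
    · intro h; linarith
    · rintro ⟨i, -, hxi⟩; exact absurd hxi (hx i)

lemma meas_dist_sum_ind (X : RIS II) {ι : Type*} [Fintype ι] [DecidableEq ι] {P : ι → Set ℝ}
    (hPm : ∀ i, MeasurableSet (P i)) (hPI : ∀ i, P i ⊆ II)
    (hdis : Pairwise (Function.onFun Disjoint P)) {μ0 : ℝ≥0∞}
    (hPvol : ∀ i, volume (P i) = μ0)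
    (w : ι → ℝ) (hw : ∀ i, 0 ≤ w i) {τ : ℝ} (hτ : 0 < τ) :
    (volume.restrict II) {x | τ < |∑ i, (P i).indicator (fun _ => w i) x|}
      = (Finset.univ.filter (fun i => τ < w i)).card • μ0 := by
  rw [dist_sum_ind hdis w hw hτ]
  rw [measure_biUnion_finset ?_ (fun i _ => hPm i)]
  · rw [Finset.sum_congr rfl (fun i _ => ?_), Finset.sum_const]
    rw [restrict_apply_of_subset (hPI i), hPvol i]
  · intro i hi j hj hij
    exact hdis hij

/-- Rearranging the values of a disjoint family of equal-measure cells preserves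
membership and norm. -/
lemma perm_norm (X : RIS II) {ι : Type*} [Fintype ι] [DecidableEq ι]
    {P : ι → Set ℝ} (hPm : ∀ i, MeasurableSet (P i)) (hPI : ∀ i, P i ⊆ II)
    (hdis : Pairwise (Function.onFun Disjoint P)) {μ0 : ℝ≥0∞}
    (hPvol : ∀ i, volume (P i) = μ0)
    {v : ι → ℝ} (hv : ∀ i, 0 ≤ v i) (σ : Equiv.Perm ι)
    (hmem : X.Mem (fun x => ∑ i, (P i).indicator (fun _ => v i) x)) :
    X.Mem (fun x => ∑ i, (P i).indicator (fun _ => v (σ i)) x) ∧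
      X.N (fun x => ∑ i, (P i).indicator (fun _ => v (σ i)) x)
        = X.N (fun x => ∑ i, (P i).indicator (fun _ => v i) x) := by
  apply X.symm _ _ (sum_ind_measurable P hPm _).aemeasurable hmem
  intro τ hτ
  rw [meas_dist_sum_ind X hPm hPI hdis hPvol _ (fun i => hv (σ i)) hτ,
    meas_dist_sum_ind X hPm hPI hdis hPvol _ hv hτ]
  congr 1
  apply Finset.card_equiv σ
  intro i
  simp


lemma smul_ind_le (X : RIS II) {A : Set ℝ} (hAm : MeasurableSet A) (hAI : A ⊆ II)
    {t : ℝ} (ht1 : t ≤ 1) (hAvol : volume A = ENNReal.ofReal t)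
    (hmemA : X.Mem (A.indicator fun _ => (1:ℝ)))
    {c : ℝ} (hc : 0 ≤ c) {s : ℝ → ℝ} (hs : X.Mem s)
    (hle : ∀ᵐ x ∂(volume.restrict II), x ∈ A → c ≤ |s x|) :
    c * fund X t ≤ X.N s := by
  have hres : (volume.restrict II) A = ENNReal.ofReal t := by
    rw [restrict_apply_of_subset hAI, hAvol]
  have hfund : fund X t = X.N (A.indicator fun _ => (1:ℝ)) :=
    (mem_norm_ind X hmemA ht1 hres).2
  have hideal := X.ideal (c • (A.indicator fun _ => (1:ℝ))) s
    ((measurable_const.indicator hAm).const_smul c).aemeasurable ?_ hs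
  · have h2 := hideal.2
    rwa [X.smul_norm c _ hmemA, abs_of_nonneg hc, ← hfund] at h2
  · filter_upwards [hle] with x hx
    by_cases hxA : x ∈ A
    · simp only [Pi.smul_apply, Set.indicator_of_mem hxA, smul_eq_mul, mul_one]
      rw [abs_of_nonneg hc]
      exact hx hxA
    · simp [Set.indicator_of_notMem hxA]

lemma cons_ne_cons {m : ℕ} {x y : Bool} {b b' : Fin m → Bool} (h : x ≠ y) :
    Fin.cons (α := fun _ => Bool) x b ≠ Fin.cons y b' := by
  intro hc
  exact h (by rw [← Fin.cons_zero (α := fun _ => Bool) x b, hc, Fin.cons_zero])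

lemma cons_inj {m : ℕ} {x : Bool} {b b' : Fin m → Bool}
    (h : Fin.cons (α := fun _ => Bool) x b = Fin.cons x b') : b = b' := by
  funext j
  have h2 := congrFun h j.succ
  rwa [Fin.cons_succ, Fin.cons_succ] at h2

lemma rec_bound (X : RIS II) {A : Set ℝ} (hAm : MeasurableSet A) (hAI : A ⊆ II)
    {t : ℝ} (ht0 : 0 ≤ t) (ht1 : t ≤ 1) (hAvol : volume A = ENNReal.ofReal t)
    (hmemA : X.Mem (A.indicator fun _ => (1:ℝ))) :
    ∀ (m : ℕ) (P : (Fin m → Bool) → Set ℝ) (v : (Fin m → Bool) → ℝ),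
      (∀ i, MeasurableSet (P i)) → (∀ i, P i ⊆ A) →
      Pairwise (Function.onFun Disjoint P) →
      (∀ i, volume (P i) = ENNReal.ofReal (t / 2^m)) →
      (∀ i, 0 ≤ v i) →
      ∀ s, X.Mem s → (s = fun x => ∑ i, (P i).indicator (fun _ => v i) x) →
      ((∑ i, v i) / 2^m) * fund X t ≤ X.N s := by
  intro m
  induction m with
  | zero =>
    intro P v hPm hPA hdis hPvol hv s hs hseq
    set d : Fin 0 → Bool := default with hd
    have hsum : (∑ i, v i) = v d := Fintype.sum_subsingleton v d
    have hvolP : volume (P d) = ENNReal.ofReal t := by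
      simpa using hPvol d
    have hnull : volume (A \ P d) = 0 := by
      rw [measure_diff (hPA d) (hPm d).nullMeasurableSet
        (by rw [hvolP]; exact ENNReal.ofReal_ne_top), hvolP, hAvol, tsub_self]
    have h0 : ∀ᵐ x ∂volume, x ∉ A \ P d := measure_eq_zero_iff_ae_notMem.mp hnull
    have hle : ∀ᵐ x ∂(volume.restrict II), x ∈ A → v d ≤ |s x| := by
      filter_upwards [h0.filter_mono (ae_mono Measure.restrict_le_self)] with x hx hxA
      have hxP : x ∈ P d := by
        by_contra hxP
        exact hx ⟨hxA, hxP⟩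
      simp only [hseq]
      rw [sumval P v hdis hxP, abs_of_nonneg (hv d)]
    rw [hsum]
    simp only [pow_zero, div_one]
    exact smul_ind_le X hAm hAI ht1 hAvol hmemA (hv d) hs hle
  | succ m ih =>
    intro P v hPm hPA hdis hPvol hv s hs hseq
    classical
    set cf : (Fin m → Bool) → (Fin (m+1) → Bool) := fun b => Fin.cons false b with hcf
    set ct : (Fin m → Bool) → (Fin (m+1) → Bool) := fun b => Fin.cons true b with hct
    have hinv : Function.Involutive
        (fun i : Fin (m+1) → Bool => Function.update i 0 (!(i 0))) := by
      intro i; funext j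
      rcases eq_or_ne j 0 with rfl | hj
      · simp
      · simp [Function.update_of_ne hj]
    set σ : Equiv.Perm (Fin (m+1) → Bool) := hinv.toPerm _ with hσdef
    have hupdate : ∀ (x : Bool) (b : Fin m → Bool) (y : Bool),
        Function.update (Fin.cons (α := fun _ => Bool) x b) 0 y = Fin.cons y b := by
      intro x b y; funext j
      refine Fin.cases ?_ (fun j' => ?_) j
      · simp
      · simp [Function.update_of_ne (Fin.succ_ne_zero j')]
    have hσapp : ∀ i, σ i = Function.update i 0 (!(i 0)) := fun i => rfl
    have hσcf : ∀ b, σ (cf b) = ct b := by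
      intro b
      rw [hσapp, hcf, hct]
      simp only [Fin.cons_zero, Bool.not_false]
      exact hupdate false b true
    have hσct : ∀ b, σ (ct b) = cf b := by
      intro b
      rw [hσapp, hcf, hct]
      simp only [Fin.cons_zero, Bool.not_true]
      exact hupdate true b false
    have hs2 : X.Mem (fun x => ∑ i, (P i).indicator (fun _ => v i) x) := hseq ▸ hs
    have hperm := perm_norm X hPm (fun i => (hPA i).trans hAI) hdis hPvol hv σ hs2
    set s' : ℝ → ℝ := fun x => ∑ i, (P i).indicator (fun _ => v (σ i)) x with hs'def
    have hmem' : X.Mem s' := hperm.1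
    have hNs' : X.N s' = X.N s := by rw [hperm.2, ← hseq]
    set Q : (Fin m → Bool) → Set ℝ := fun b => P (cf b) ∪ P (ct b) with hQ
    set w : (Fin m → Bool) → ℝ := fun b => (v (cf b) + v (ct b))/2 with hwdef
    set g : ℝ → ℝ := (2⁻¹ : ℝ) • (s + s') with hg
    have hmemg : X.Mem g := X.smul_mem _ _ (X.add_mem _ _ hs hmem')
    have hNg : X.N g ≤ X.N s := by
      rw [hg, X.smul_norm _ _ (X.add_mem _ _ hs hmem')]
      have h3 := X.add_le s s' hs hmem'
      rw [hNs'] at h3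
      rw [abs_of_nonneg (by norm_num : (0:ℝ) ≤ 2⁻¹)]
      linarith
    have hQm : ∀ b, MeasurableSet (Q b) := fun b => (hPm _).union (hPm _)
    have hQA : ∀ b, Q b ⊆ A := fun b => Set.union_subset (hPA _) (hPA _)
    have hQdis : Pairwise (Function.onFun Disjoint Q) := by
      intro b b' hbb
      simp only [Function.onFun, hQ]
      apply Set.disjoint_union_left.mpr
      constructor <;> apply Set.disjoint_union_right.mpr <;> constructor
      · exact hdis (fun h => hbb (cons_inj h))
      · exact hdis (cons_ne_cons (by simp))
      · exact hdis (cons_ne_cons (by simp))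
      · exact hdis (fun h => hbb (cons_inj h))
    have hQvol : ∀ b, volume (Q b) = ENNReal.ofReal (t / 2^m) := by
      intro b
      rw [hQ]
      simp only []
      rw [measure_union (hdis (cons_ne_cons (by simp))) (hPm _), hPvol, hPvol,
        ← ENNReal.ofReal_add (div_nonneg ht0 (by positivity)) (div_nonneg ht0 (by positivity))]
      congr 1
      rw [pow_succ]
      field_simp
      ring
    have hwnn : ∀ b, 0 ≤ w b := fun b => by
      have h1 := hv (cf b); have h2 := hv (ct b)
      rw [hwdef]; dsimp only; linarith
    have hgeq : g = fun x => ∑ b, (Q b).indicator (fun _ => w b) x := by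
      funext x
      have hgx : g x = 2⁻¹ * (s x + s' x) := rfl
      by_cases hx : ∃ j, x ∈ P j
      · obtain ⟨j, hj⟩ := hx
        have hsx : s x = v j := by rw [hseq]; exact sumval P v hdis hj
        have hs'x : s' x = v (σ j) := sumval P _ hdis hj
        have hjeq : j = Fin.cons (j 0) (Fin.tail j) := (Fin.cons_self_tail j).symm
        rcases Bool.eq_false_or_eq_true (j 0) with h0 | h0
        · have hjct : j = ct (Fin.tail j) := by
            show j = Fin.cons true (Fin.tail j)
            rw [← h0]; exact hjeq
          have hxQ : x ∈ Q (Fin.tail j) := Or.inr (hjct ▸ hj)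
          rw [hgx, hsx, hs'x, hjct, hσct, sumval Q w hQdis hxQ, hwdef]
          ring
        · have hjcf : j = cf (Fin.tail j) := by
            show j = Fin.cons false (Fin.tail j)
            rw [← h0]; exact hjeq
          have hxQ : x ∈ Q (Fin.tail j) := Or.inl (hjcf ▸ hj)
          rw [hgx, hsx, hs'x, hjcf, hσcf, sumval Q w hQdis hxQ, hwdef]
          ring
      · push_neg at hx
        have hxQ : ∀ b, x ∉ Q b := fun b hb => hb.elim (hx _) (hx _)
        have hsx : s x = 0 := by rw [hseq]; exact sumval_zero P v hx
        have hs'x : s' x = 0 := sumval_zero P _ (fun i => hx i)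
        rw [hgx, hsx, hs'x, sumval_zero Q w hxQ]
        ring
    have hsum : ∑ b, w b = (∑ i, v i)/2 := by
      have h1 : ∑ i, v i = ∑ b, v (ct b) + ∑ b, v (cf b) := by
        rw [← Equiv.sum_comp (Fin.consEquiv (fun _ : Fin (m+1) => Bool)) v]
        rw [Fintype.sum_prod_type]
        rw [Fintype.sum_bool]
        rfl
      rw [hwdef]
      simp only []
      rw [← Finset.sum_div, Finset.sum_add_distrib, h1]
      ring
    have hfin := ih Q w hQm hQA hQdis hQvol hwnn g hmemg hgeq
    calc ((∑ i, v i)/2^(m+1)) * fund X t = ((∑ b, w b)/2^m) * fund X t := by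
          rw [hsum, pow_succ]; ring
      _ ≤ X.N g := hfin
      _ ≤ X.N s := hNg


lemma rec_bound' (X : RIS II) {A : Set ℝ} (hAm : MeasurableSet A) (hAI : A ⊆ II)
    {t : ℝ} (ht0 : 0 ≤ t) (ht1 : t ≤ 1) (hAvol : volume A = ENNReal.ofReal t)
    (hmemA : X.Mem (A.indicator fun _ => (1:ℝ)))
    (m : ℕ) {ι : Type} [Fintype ι] [DecidableEq ι] (hcard : Fintype.card ι = 2^m)
    (P : ι → Set ℝ) (v : ι → ℝ)
    (hPm : ∀ i, MeasurableSet (P i)) (hPA : ∀ i, P i ⊆ A)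
    (hdis : Pairwise (Function.onFun Disjoint P))
    (hPvol : ∀ i, volume (P i) = ENNReal.ofReal (t / 2^m))
    (hv : ∀ i, 0 ≤ v i)
    (s : ℝ → ℝ) (hs : X.Mem s)
    (hseq : s = fun x => ∑ i, (P i).indicator (fun _ => v i) x) :
    ((∑ i, v i) / 2^m) * fund X t ≤ X.N s := by
  have hcard2 : Fintype.card ι = Fintype.card (Fin m → Bool) := by
    rw [hcard, Fintype.card_fun]
    simp
  have e : ι ≃ (Fin m → Bool) := Fintype.equivOfCardEq hcard2
  have h := rec_bound X hAm hAI ht0 ht1 hAvol hmemA m (fun b => P (e.symm b))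
    (fun b => v (e.symm b)) (fun b => hPm _) (fun b => hPA _)
    (fun b b' hbb => hdis (e.symm.injective.ne hbb))
    (fun b => hPvol _) (fun b => hv _) s hs ?_
  · rwa [Equiv.sum_comp e.symm v] at h
  · rw [hseq]; funext x
    exact (Fintype.sum_equiv e.symm _ _ (fun b => rfl)).symm

lemma avg_bound (X : RIS II) {A : Set ℝ} (hAm : MeasurableSet A) (hAI : A ⊆ II)
    {t : ℝ} (ht0 : 0 < t) (ht1 : t ≤ 1) (hAvol : volume A = ENNReal.ofReal t)
    (hmemA : X.Mem (A.indicator fun _ => (1:ℝ)))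
    (hfund : 0 < fund X t)
    {f : ℝ → ℝ} (hf : X.Mem f) :
    ∫⁻ x in A, ENNReal.ofReal |f x| ≤ ENNReal.ofReal (t * X.N f / fund X t) := by
  classical
  rw [lintegral_eq_nnreal]
  apply iSup_le; intro φ; apply iSup_le; intro hφ
  set r0 : Finset ℝ≥0 := φ.range.erase 0 with hr0
  set S : ℝ≥0 → Set ℝ := fun c => (⇑φ) ⁻¹' {c} ∩ A with hS
  have hSm : ∀ c, MeasurableSet (S c) := fun c => (φ.measurableSet_fiber c).inter hAm
  have hSA : ∀ c, S c ⊆ A := fun c => Set.inter_subset_right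
  have hSII : ∀ c, S c ⊆ II := fun c => (hSA c).trans hAI
  have hSdis : ∀ c c' : ℝ≥0, c ≠ c' → Disjoint (S c) (S c') := by
    intro c c' hcc
    apply Set.disjoint_left.mpr
    rintro x ⟨hx1, -⟩ ⟨hx2, -⟩
    exact hcc (hx1.symm.trans hx2)
  have hSfin : ∀ c, volume (S c) ≠ ∞ := fun c => by
    refine ne_of_lt (lt_of_le_of_lt (measure_mono (hSA c)) ?_)
    rw [hAvol]; exact ENNReal.ofReal_lt_top
  have hφf : ∀ c : ℝ≥0, ∀ x ∈ S c, (c : ℝ) ≤ |f x| := by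
    intro c x hx
    have h1 := hφ x
    rw [show φ x = c from hx.1] at h1
    have h2 : (c : ℝ≥0∞) ≤ ENNReal.ofReal |f x| := h1
    rw [← ENNReal.ofReal_coe_nnreal] at h2
    exact (ENNReal.ofReal_le_ofReal_iff (abs_nonneg _)).mp h2
  -- the key real estimate, for every scale 2^m
  have key : ∀ m : ℕ, ∑ c ∈ r0, (c : ℝ) * (volume (S c)).toReal
      ≤ t * X.N f / fund X t + (t / 2^m) * ∑ c ∈ r0, (c : ℝ) := by
    intro m
    set n : ℕ := 2^m with hn
    have hnpos : 0 < (n:ℝ) := by positivity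
    set k : ℝ≥0 → ℕ := fun c => ⌊(volume (S c)).toReal * n / t⌋₊ with hk
    have hk1 : ∀ c, (k c : ℝ) * (t/n) ≤ (volume (S c)).toReal := by
      intro c
      have h1 : (k c : ℝ) ≤ (volume (S c)).toReal * n / t :=
        Nat.floor_le (by positivity)
      rw [le_div_iff₀ ht0] at h1
      have hvnn : (0:ℝ) ≤ (volume (S c)).toReal := ENNReal.toReal_nonneg
      calc (k c : ℝ) * (t/n) = (k c : ℝ) * t / n := by ring
        _ ≤ (volume (S c)).toReal * n / n := by gcongr
        _ = (volume (S c)).toReal := by field_simp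
    have hk2 : ∀ c, (volume (S c)).toReal ≤ ((k c : ℝ) + 1) * (t/n) := by
      intro c
      have h1 : (volume (S c)).toReal * n / t < (k c : ℝ) + 1 := Nat.lt_floor_add_one _
      rw [div_lt_iff₀ ht0] at h1
      have := mul_lt_mul_of_pos_right h1 (by positivity : (0:ℝ) < 1/n)
      calc (volume (S c)).toReal = (volume (S c)).toReal * n * (1/n) := by field_simp
        _ ≤ ((k c : ℝ) + 1) * t * (1/n) := by nlinarith
        _ = ((k c : ℝ) + 1) * (t/n) := by ring
    have hsumS : ∑ c ∈ r0, (volume (S c)).toReal ≤ t := by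
      have h1 : ∑ c ∈ r0, volume (S c) ≤ ENNReal.ofReal t := by
        rw [← measure_biUnion_finset (fun c _ d _ h => hSdis c d h) (fun c _ => hSm c), ← hAvol]
        apply measure_mono
        apply Set.iUnion₂_subset
        intro c _
        exact hSA c
      have h2 := ENNReal.toReal_mono ENNReal.ofReal_ne_top h1
      rw [ENNReal.toReal_sum (fun c _ => hSfin c)] at h2
      rwa [ENNReal.toReal_ofReal ht0.le] at h2
    have hKn : ∑ c ∈ r0.attach, k c.1 ≤ n := by
      by_contra hcon
      push_neg at hcon
      have h1 : (n:ℝ) * (t/n) < (∑ c ∈ r0.attach, (k c.1:ℝ)) * (t/n) := by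
        apply mul_lt_mul_of_pos_right ?_ (by positivity)
        exact_mod_cast (by exact_mod_cast hcon : (n:ℝ) < ∑ c ∈ r0.attach, (k c.1:ℝ))
      have h2 : (∑ c ∈ r0.attach, (k c.1:ℝ)) * (t/n) ≤ ∑ c ∈ r0.attach, (volume (S c.1)).toReal := by
        rw [Finset.sum_mul]
        exact Finset.sum_le_sum (fun c _ => hk1 c.1)
      have h3 : ∑ c ∈ r0.attach, (volume (S c.1)).toReal = ∑ c ∈ r0, (volume (S c)).toReal :=
        Finset.sum_attach r0 (fun c => (volume (S c)).toReal)
      have h4 : (n:ℝ) * (t/n) = t := by field_simp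
      linarith
    have hcellbound : ∀ c : {c // c ∈ r0},
        (↑(k c.1) : ℝ≥0∞) * ENNReal.ofReal (t/n) ≤ volume (S c.1) := by
      intro c
      have h1 : ENNReal.ofReal ((k c.1 : ℝ) * (t/n)) ≤ ENNReal.ofReal ((volume (S c.1)).toReal) :=
        ENNReal.ofReal_le_ofReal (hk1 c.1)
      rwa [ENNReal.ofReal_mul (by positivity), ENNReal.ofReal_natCast,
        ENNReal.ofReal_toReal (hSfin c.1)] at h1
    have hpart := fun c : {c // c ∈ r0} =>
      partn (hSm c.1) (hSII c.1) (ENNReal.ofReal (t/n)) (k c.1) (hcellbound c)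
    choose C hCm hCS hCdis hCvol using hpart
    set K : ℕ := ∑ c ∈ r0.attach, k c.1 with hK
    set U : Set ℝ := ⋃ p : (Σ c : {c // c ∈ r0}, Fin (k c.1)), C p.1 p.2 with hU
    have hUdis : Pairwise (Function.onFun Disjoint
        (fun p : (Σ c : {c // c ∈ r0}, Fin (k c.1)) => C p.1 p.2)) := by
      rintro ⟨c, j⟩ ⟨c', j'⟩ hne
      rcases eq_or_ne c c' with rfl | hcc
      · have hjj : j ≠ j' := fun h => hne (by rw [h])
        exact hCdis c hjj
      · exact Set.disjoint_of_subset (hCS c j) (hCS c' j')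
          (hSdis c.1 c'.1 (fun h => hcc (Subtype.ext h)))
    have hUm : MeasurableSet U := MeasurableSet.iUnion (fun p => hCm p.1 p.2)
    have hUA : U ⊆ A := Set.iUnion_subset (fun p => (hCS p.1 p.2).trans (hSA p.1.1))
    have hUvol : volume U = (K : ℝ≥0∞) * ENNReal.ofReal (t/n) := by
      rw [hU, measure_iUnion hUdis (fun p => hCm p.1 p.2), tsum_fintype]
      rw [Finset.sum_congr rfl (fun p _ => hCvol p.1 p.2), Finset.sum_const]
      rw [nsmul_eq_mul]
      congr 1
      rw [Finset.card_univ, Fintype.card_sigma]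
      simp only [Fintype.card_fin]
      rw [Finset.univ_eq_attach, ← hK]
    have hUfin : volume U ≠ ∞ := by
      refine ne_of_lt (lt_of_le_of_lt (measure_mono hUA) ?_)
      rw [hAvol]; exact ENNReal.ofReal_lt_top
    set R : Set ℝ := A \ U with hRdef
    have hRm : MeasurableSet R := hAm.diff hUm
    have hRII : R ⊆ II := fun x hx => hAI hx.1
    have hofn : ((n:ℝ≥0∞)) * ENNReal.ofReal (t/n) = ENNReal.ofReal t := by
      rw [← ENNReal.ofReal_natCast, ← ENNReal.ofReal_mul (by positivity)]
      congr 1; field_simp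
    have haK : (↑(n - K) : ℝ≥0∞) * ENNReal.ofReal (t/n) ≤ volume R := by
      rw [hRdef, measure_diff hUA hUm.nullMeasurableSet hUfin, hUvol, hAvol]
      apply ENNReal.le_sub_of_add_le_right
      · exact ENNReal.mul_ne_top (by simp) ENNReal.ofReal_ne_top
      · rw [← add_mul, ← Nat.cast_add, Nat.sub_add_cancel hKn, hofn]
    obtain ⟨D, hDm, hDS, hDdis, hDvol⟩ := partn hRm hRII (ENNReal.ofReal (t/n)) (n - K) haK
    have hcard : Fintype.card ((Σ c : {c // c ∈ r0}, Fin (k c.1)) ⊕ Fin (n - K)) = 2^m := by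
      rw [Fintype.card_sum, Fintype.card_sigma]
      simp only [Fintype.card_fin]
      rw [Finset.univ_eq_attach, ← hK, Nat.add_sub_cancel' hKn]
    set P : ((Σ c : {c // c ∈ r0}, Fin (k c.1)) ⊕ Fin (n - K)) → Set ℝ :=
      Sum.elim (fun p => C p.1 p.2) D with hPdef
    set v : ((Σ c : {c // c ∈ r0}, Fin (k c.1)) ⊕ Fin (n - K)) → ℝ :=
      Sum.elim (fun p => ((p.1.1 : ℝ≥0) : ℝ)) (fun _ => 0) with hvdef
    have hPm : ∀ i, MeasurableSet (P i) := by
      rintro (p | j)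
      · exact hCm p.1 p.2
      · exact hDm j
    have hPA : ∀ i, P i ⊆ A := by
      rintro (p | j)
      · exact (hCS p.1 p.2).trans (hSA p.1.1)
      · exact (hDS j).trans (fun x hx => hx.1)
    have hPsub : ∀ p : (Σ c : {c // c ∈ r0}, Fin (k c.1)), C p.1 p.2 ⊆ U := by
      intro p
      exact Set.subset_iUnion (fun q : (Σ c : {c // c ∈ r0}, Fin (k c.1)) => C q.1 q.2) p
    have hPdis : Pairwise (Function.onFun Disjoint P) := by
      rintro (p | j) (q | j') hne
      · exact hUdis (fun h => hne (by rw [h]))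
      · exact Set.disjoint_left.mpr (fun x hx hx' => (hDS j' hx').2 (hPsub p hx))
      · exact Set.disjoint_left.mpr (fun x hx hx' => (hDS j hx).2 (hPsub q hx'))
      · exact hDdis (fun h => hne (by rw [h]))
    have hn' : ((n:ℕ):ℝ) = 2^m := by rw [hn]; push_cast; ring
    have hPvol : ∀ i, volume (P i) = ENNReal.ofReal (t / 2^m) := by
      rintro (p | j)
      · rw [show P (Sum.inl p) = C p.1 p.2 from rfl, hCvol p.1 p.2, hn']
      · rw [show P (Sum.inr j) = D j from rfl, hDvol j, hn']
    have hvnn : ∀ i, 0 ≤ v i := by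
      rintro (p | j)
      · exact (p.1.1 : ℝ≥0).coe_nonneg
      · exact le_refl 0
    set s : ℝ → ℝ := fun x => ∑ i, (P i).indicator (fun _ => v i) x with hsdef
    have hsmem : X.Mem s ∧ X.N s ≤ X.N f := by
      apply X.ideal s f (sum_ind_measurable P hPm v).aemeasurable ?_ hf
      apply ae_of_all
      intro x
      by_cases hx : ∃ i, x ∈ P i
      · obtain ⟨i, hi⟩ := hx
        rw [hsdef]
        simp only []
        rw [sumval P v hPdis hi, abs_of_nonneg (hvnn i)]
        match i with
        | Sum.inl p =>
          have hxS : x ∈ S p.1.1 := hCS p.1 p.2 hi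
          exact hφf p.1.1 x hxS
        | Sum.inr j => exact abs_nonneg _
      · push_neg at hx
        rw [hsdef]
        simp only []
        rw [sumval_zero P v hx]
        simp
    have hrec := rec_bound' X hAm hAI ht0.le ht1 hAvol hmemA m hcard P v hPm hPA hPdis
      hPvol hvnn s hsmem.1 rfl
    have hsumv : ∑ i, v i = ∑ c ∈ r0.attach, (k c.1 : ℝ) * (c.1 : ℝ) := by
      rw [hvdef, Fintype.sum_sum_type]
      simp only [Sum.elim_inl, Sum.elim_inr, Finset.sum_const, smul_zero, add_zero]
      rw [← Finset.univ_sigma_univ, Finset.sum_sigma]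
      rw [Finset.univ_eq_attach]
      apply Finset.sum_congr rfl
      intro c _
      simp [mul_comm]
    have hineq : (∑ c ∈ r0, (k c : ℝ) * (c : ℝ)) / n * fund X t ≤ X.N f := by
      have h1 : ((∑ i, v i) / 2^m) * fund X t ≤ X.N s := hrec
      rw [hsumv, Finset.sum_attach r0 (fun c => (k c : ℝ) * (c : ℝ))] at h1
      have h2 : ((2:ℝ)^m) = (n:ℝ) := by rw [hn]; push_cast; ring
      rw [h2] at h1
      exact le_trans h1 hsmem.2
    have h5 : (∑ c ∈ r0, (k c : ℝ) * (c : ℝ)) * (t/n) ≤ t * X.N f / fund X t := by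
      have h6 : (∑ c ∈ r0, (k c : ℝ) * (c : ℝ)) / n ≤ X.N f / fund X t :=
        (le_div_iff₀ hfund).mpr hineq
      have h7 := mul_le_mul_of_nonneg_left h6 ht0.le
      calc (∑ c ∈ r0, (k c : ℝ) * (c : ℝ)) * (t/n)
          = t * ((∑ c ∈ r0, (k c : ℝ) * (c : ℝ)) / n) := by ring
        _ ≤ t * (X.N f / fund X t) := h7
        _ = t * X.N f / fund X t := by ring
    calc ∑ c ∈ r0, (c : ℝ) * (volume (S c)).toReal
        ≤ ∑ c ∈ r0, (c : ℝ) * (((k c : ℝ) + 1) * (t/n)) := by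
          apply Finset.sum_le_sum
          intro c _
          exact mul_le_mul_of_nonneg_left (hk2 c) c.coe_nonneg
      _ = (∑ c ∈ r0, (k c : ℝ) * (c : ℝ)) * (t/n) + (t/n) * ∑ c ∈ r0, (c : ℝ) := by
          rw [Finset.sum_mul, Finset.mul_sum, ← Finset.sum_add_distrib]
          apply Finset.sum_congr rfl
          intro c _
          ring
      _ ≤ t * X.N f / fund X t + (t / 2^m) * ∑ c ∈ r0, (c : ℝ) := by
          have h7 : (t/(n:ℝ)) = t / 2^m := by rw [hn]; push_cast; ring
          rw [← h7]
          linarith [h5]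
  have hL : ∑ c ∈ r0, (c:ℝ) * (volume (S c)).toReal ≤ t * X.N f / fund X t := by
    by_contra hcon
    push_neg at hcon
    set Cs := ∑ c ∈ r0, (c:ℝ) with hCsdef
    have hCsnn : 0 ≤ Cs := Finset.sum_nonneg (fun c _ => c.coe_nonneg)
    set ε := ∑ c ∈ r0, (c:ℝ) * (volume (S c)).toReal - t * X.N f / fund X t with hεdef
    have hεpos : 0 < ε := by rw [hεdef]; linarith
    obtain ⟨m, hm⟩ := pow_unbounded_of_one_lt (t * Cs / ε) (by norm_num : (1:ℝ) < 2)
    have h1 := key m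
    have h2 : t * Cs < 2^m * ε := by
      rw [div_lt_iff₀ hεpos] at hm
      linarith
    have h3 : (t / 2^m) * Cs < ε := by
      rw [div_mul_eq_mul_div, div_lt_iff₀ (by positivity : (0:ℝ) < 2^m)]
      linarith
    rw [hεdef] at h3
    linarith
  have hlint : (φ.map ((↑) : ℝ≥0 → ℝ≥0∞)).lintegral (volume.restrict A)
      = ∑ c ∈ r0, (c : ℝ≥0∞) * volume (S c) := by
    rw [SimpleFunc.map_lintegral]
    rw [← Finset.sum_erase (s := φ.range)
      (f := fun c : ℝ≥0 => (c : ℝ≥0∞) * (volume.restrict A) (⇑φ ⁻¹' {c}))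
      (by simp : ((0:ℝ≥0) : ℝ≥0∞) * (volume.restrict A) (⇑φ ⁻¹' {(0:ℝ≥0)}) = 0)]
    apply Finset.sum_congr rfl
    intro c _
    congr 1
    rw [Measure.restrict_apply (φ.measurableSet_fiber c)]
  rw [hlint]
  have heq : ∑ c ∈ r0, (c:ℝ≥0∞) * volume (S c)
      = ENNReal.ofReal (∑ c ∈ r0, (c:ℝ) * (volume (S c)).toReal) := by
    rw [ENNReal.ofReal_sum_of_nonneg
      (fun c _ => mul_nonneg c.coe_nonneg ENNReal.toReal_nonneg)]
    apply Finset.sum_congr rfl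
    intro c _
    rw [ENNReal.ofReal_mul c.coe_nonneg, ENNReal.ofReal_coe_nnreal,
      ENNReal.ofReal_toReal (hSfin c)]
  rw [heq]
  exact ENNReal.ofReal_le_ofReal hL


lemma integral_bound (X : RIS II) {A : Set ℝ} (hAm : MeasurableSet A) (hAI : A ⊆ II)
    {t : ℝ} (ht0 : 0 < t) (ht1 : t ≤ 1) (hAvol : volume A = ENNReal.ofReal t)
    (hmemA : X.Mem (A.indicator fun _ => (1:ℝ)))
    (hfund : 0 < fund X t)
    {a : ℝ → ℝ} (ha : X.Mem a) :
    Integrable a (volume.restrict A) ∧ |∫ x in A, a x| ≤ t * X.N a / fund X t := by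
  have havg := avg_bound X hAm hAI ht0 ht1 hAvol hmemA hfund ha
  have hmeas : AEMeasurable a (volume.restrict A) := by
    have h1 := X.mem_meas a ha
    have h2 : (volume : Measure ℝ).restrict A = (volume.restrict II).restrict A := by
      rw [Measure.restrict_restrict hAm, Set.inter_eq_self_of_subset_left hAI]
    rw [h2]
    exact h1.restrict
  have hfin : ∫⁻ x in A, ENNReal.ofReal |a x| < ⊤ := lt_of_le_of_lt havg ENNReal.ofReal_lt_top
  have hint : Integrable a (volume.restrict A) := by
    constructor
    · exact hmeas.aestronglyMeasurable
    · rw [hasFiniteIntegral_iff_norm]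
      simpa [Real.norm_eq_abs] using hfin
  refine ⟨hint, ?_⟩
  have h3 : |∫ x in A, a x| ≤ ∫ x in A, |a x| := by
    have h := norm_integral_le_integral_norm (μ := volume.restrict A) a
    simpa [Real.norm_eq_abs] using h
  have h4 : ∫ x in A, |a x| = (∫⁻ x in A, ENNReal.ofReal |a x|).toReal := by
    rw [integral_eq_lintegral_of_nonneg_ae (ae_of_all _ fun x => abs_nonneg _)
      (by simpa [Real.norm_eq_abs] using hmeas.aestronglyMeasurable.norm)]
  have h6 : (∫⁻ x in A, ENNReal.ofReal |a x|).toReal ≤ t * X.N a / fund X t := by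
    have h7 := ENNReal.toReal_mono ENNReal.ofReal_ne_top havg
    rwa [ENNReal.toReal_ofReal
      (div_nonneg (mul_nonneg ht0.le (X.nonneg a)) hfund.le)] at h7
  linarith [h4 ▸ h3]

end Stmt1Aux

/-- If `X₀ ⊂ X₁` are r.i. spaces on `[0,1]` with `‖·‖_{X₁} ≤ ‖·‖_{X₀}`,
then for `α, β > 0` and a measurable `A ⊆ [0,1]` with `m(A) = t`,
`k(α, β, χ_A; X₀, X₁) = min(α·φ_{X₀}(t), β·φ_{X₁}(t))`. -/
theorem stmt1 (X0 X1 : RIS (Set.Icc (0:ℝ) 1))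
    (hemb : ∀ f, X0.Mem f → X1.Mem f ∧ X1.N f ≤ X0.N f)
    (hconst : X0.Mem ((Set.Icc (0:ℝ) 1).indicator fun _ => (1:ℝ)))
    (α β : ℝ) (hα : 0 < α) (hβ : 0 < β)
    (A : Set ℝ) (hA : MeasurableSet A) (hAI : A ⊆ Set.Icc 0 1)
    (t : ℝ) (ht0 : 0 ≤ t) (ht : volume A = ENNReal.ofReal t) :
    Kfun X0.toBFL X1.toBFL α β (A.indicator fun _ => (1:ℝ))
      = min (α * fund X0 t) (β * fund X1 t) := by
  classical
  have ht1 : t ≤ 1 := by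
    apply ENNReal.ofReal_le_one.mp
    rw [← ht]
    calc volume A ≤ volume (Set.Icc (0:ℝ) 1) := measure_mono hAI
      _ = 1 := by simp [Real.volume_Icc]
  have hres : (volume.restrict Stmt1Aux.II) A = ENNReal.ofReal t := by
    rw [Stmt1Aux.restrict_apply_of_subset hAI, ht]
  have hmemA0 : X0.Mem (A.indicator fun _ => (1:ℝ)) := Stmt1Aux.mem_ind X0 hconst hA
  have hfund0 : fund X0 t = X0.N (A.indicator fun _ => (1:ℝ)) :=
    (Stmt1Aux.mem_norm_ind X0 hmemA0 ht1 hres).2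
  have hmemA1 : X1.Mem (A.indicator fun _ => (1:ℝ)) := (hemb _ hmemA0).1
  have hfund1 : fund X1 t = X1.N (A.indicator fun _ => (1:ℝ)) :=
    (Stmt1Aux.mem_norm_ind X1 hmemA1 ht1 hres).2
  set Sv := {v | ∃ a0 a1, X0.Mem a0 ∧ X1.Mem a1 ∧
    (A.indicator fun _ => (1:ℝ)) = a0 + a1 ∧
    v = α * X0.N a0 + β * X1.N a1} with hSvdef
  have hKdef : Kfun X0.toBFL X1.toBFL α β (A.indicator fun _ => (1:ℝ)) = sInf Sv := rfl
  have hmem0 : (α * fund X0 t) ∈ Sv := by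
    refine ⟨A.indicator fun _ => (1:ℝ), 0, hmemA0, X1.zero_mem, (add_zero _).symm, ?_⟩
    rw [X1.zero_norm, hfund0]; ring
  have hmem1 : (β * fund X1 t) ∈ Sv := by
    refine ⟨0, A.indicator fun _ => (1:ℝ), X0.zero_mem, hmemA1, (zero_add _).symm, ?_⟩
    rw [X0.zero_norm, hfund1]; ring
  have hlb : ∀ v ∈ Sv, (0:ℝ) ≤ v := by
    rintro v ⟨a0, a1, h0, h1, -, rfl⟩
    have hn0 := X0.nonneg a0
    have hn1 := X1.nonneg a1
    nlinarith
  have hbdd : BddBelow Sv := ⟨0, fun v hv => hlb v hv⟩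
  rw [hKdef]
  apply le_antisymm
  · exact le_min (csInf_le hbdd hmem0) (csInf_le hbdd hmem1)
  · apply le_csInf ⟨_, hmem0⟩
    rintro v ⟨a0, a1, ha0, ha1, hdecomp, rfl⟩
    have hn0 := X0.nonneg a0
    have hn1 := X1.nonneg a1
    by_cases hf1' : fund X1 t ≤ 0
    · have h1 : min (α * fund X0 t) (β * fund X1 t) ≤ β * fund X1 t := min_le_right _ _
      nlinarith
    push_neg at hf1'
    have htpos : 0 < t := by
      rcases lt_or_ge 0 t with h | h
      · exact h
      · exfalso
        have hA0 : volume A = 0 := by rw [ht, ENNReal.ofReal_eq_zero.mpr h]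
        have hae : ∀ᵐ x ∂(volume.restrict Stmt1Aux.II),
            |A.indicator (fun _ => (1:ℝ)) x| ≤ |(0:ℝ→ℝ) x| := by
          filter_upwards [(measure_eq_zero_iff_ae_notMem.mp hA0).filter_mono
            (ae_mono Measure.restrict_le_self)] with x hx
          simp [Set.indicator_of_notMem hx]
        have h2 := (X1.ideal _ 0 ((measurable_const.indicator hA).aemeasurable)
          hae X1.zero_mem).2
        rw [X1.zero_norm] at h2
        rw [hfund1] at hf1'
        linarith
    have hf0' : 0 < fund X0 t := by
      have h2 := (hemb _ hmemA0).2
      rw [hfund0]; rw [hfund1] at hf1'; linarith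
    obtain ⟨hint0, hI0⟩ :=
      Stmt1Aux.integral_bound X0 hA hAI htpos ht1 ht hmemA0 hf0' ha0
    obtain ⟨hint1, hI1⟩ :=
      Stmt1Aux.integral_bound X1 hA hAI htpos ht1 ht hmemA1 hf1' ha1
    set I0 := ∫ x in A, a0 x with hI0def
    set I1 := ∫ x in A, a1 x with hI1def
    have hIsum : I0 + I1 = t := by
      rw [hI0def, hI1def, ← integral_add hint0 hint1]
      have heq : ∀ x ∈ A, a0 x + a1 x = (1:ℝ) := by
        intro x hx
        have h2 := congrFun hdecomp x
        rw [Set.indicator_of_mem hx] at h2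
        exact h2.symm
      rw [setIntegral_congr_fun hA (fun x hx => heq x hx)]
      rw [setIntegral_const, measureReal_def, ht, smul_eq_mul, mul_one, ENNReal.toReal_ofReal ht0]
    have hg0 : |I0| * fund X0 t ≤ t * X0.N a0 := by
      calc |I0| * fund X0 t ≤ (t * X0.N a0 / fund X0 t) * fund X0 t :=
            mul_le_mul_of_nonneg_right hI0 hf0'.le
        _ = t * X0.N a0 := by field_simp
    have hg1 : |I1| * fund X1 t ≤ t * X1.N a1 := by
      calc |I1| * fund X1 t ≤ (t * X1.N a1 / fund X1 t) * fund X1 t :=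
            mul_le_mul_of_nonneg_right hI1 hf1'.le
        _ = t * X1.N a1 := by field_simp
    have hmn0 : min (α * fund X0 t) (β * fund X1 t) ≤ α * fund X0 t := min_le_left _ _
    have hmn1 : min (α * fund X0 t) (β * fund X1 t) ≤ β * fund X1 t := min_le_right _ _
    rcases le_or_gt I0 0 with hc0 | hc0
    · have h7 : t ≤ |I1| := by rw [abs_of_nonneg (by linarith)]; linarith
      have h8 : t * fund X1 t ≤ t * X1.N a1 := by nlinarith
      have h9 : fund X1 t ≤ X1.N a1 := by
        have h10 := (mul_le_mul_iff_right₀ htpos).mp h8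
        linarith
      nlinarith
    rcases le_or_gt t I0 with hc1 | hc1
    · have h7 : t ≤ |I0| := by rw [abs_of_nonneg (by linarith)]; linarith
      have h8 : t * fund X0 t ≤ t * X0.N a0 := by nlinarith
      have h9 : fund X0 t ≤ X0.N a0 := by
        have h10 := (mul_le_mul_iff_right₀ htpos).mp h8
        linarith
      nlinarith
    · have habs0 : |I0| = I0 := abs_of_nonneg hc0.le
      have habs1 : |I1| = I1 := abs_of_nonneg (by linarith)
      rw [habs0] at hg0
      rw [habs1] at hg1
      have k2 : min (α * fund X0 t) (β * fund X1 t) * I0 ≤ (α * fund X0 t) * I0 :=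
        mul_le_mul_of_nonneg_right hmn0 hc0.le
      have k3 : min (α * fund X0 t) (β * fund X1 t) * I1 ≤ (β * fund X1 t) * I1 :=
        mul_le_mul_of_nonneg_right hmn1 (by linarith)
      have k4 : (α * fund X0 t) * I0 ≤ α * (t * X0.N a0) := by
        calc (α * fund X0 t) * I0 = α * (I0 * fund X0 t) := by ring
          _ ≤ α * (t * X0.N a0) := mul_le_mul_of_nonneg_left hg0 hα.le
      have k5 : (β * fund X1 t) * I1 ≤ β * (t * X1.N a1) := by
        calc (β * fund X1 t) * I1 = β * (I1 * fund X1 t) := by ring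
          _ ≤ β * (t * X1.N a1) := mul_le_mul_of_nonneg_left hg1 hβ.le
      have k6 : min (α * fund X0 t) (β * fund X1 t) * t
          ≤ t * (α * X0.N a0 + β * X1.N a1) := by
        have e1 : min (α * fund X0 t) (β * fund X1 t) * t
            = min (α * fund X0 t) (β * fund X1 t) * I0
              + min (α * fund X0 t) (β * fund X1 t) * I1 := by
          rw [show min (α * fund X0 t) (β * fund X1 t) * I0
              + min (α * fund X0 t) (β * fund X1 t) * I1
              = min (α * fund X0 t) (β * fund X1 t) * (I0 + I1) from by ring, hIsum]
        rw [e1]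
        calc min (α * fund X0 t) (β * fund X1 t) * I0
              + min (α * fund X0 t) (β * fund X1 t) * I1
            ≤ (α * fund X0 t) * I0 + (β * fund X1 t) * I1 := add_le_add k2 k3
          _ ≤ α * (t * X0.N a0) + β * (t * X1.N a1) := add_le_add k4 k5
          _ = t * (α * X0.N a0 + β * X1.N a1) := by ring
      have k7 := (mul_le_mul_iff_right₀ htpos).mp (by linarith [k6] :
        t * (min (α * fund X0 t) (β * fund X1 t)) ≤ t * (α * X0.N a0 + β * X1.N a1))
      exact k7
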